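/- Let P_n be the path on n vertices with n odd, n = 2k+1. With the weights p_i^{i+1} = (n−i)/(n−1) if i is odd and i/(n+1) if i is even, and p_i^{i−1} = (i−1)/(n−1) if i is odd and (n+1−i)/(n+1) if i is even, one has 2 Σ_{i=1}^{n−1} √(p_i^{i+1} · p_{i+1}^{i}) = √(n² − 1). -/

import Mathlib

open Finset Matrix

noncomputable section

variable {V : Type*} [Fintype V] [DecidableEq V]

/-- The adjacency matrix of a simple graph is Hermitian (over ℝ). -/
theorem SimpleGraph.isHermitian_adjMatrix' (G : SimpleGraph V) [DecidableRel G.Adj] :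
    (G.adjMatrix ℝ).IsHermitian := by
  rw [Matrix.IsHermitian, Matrix.conjTranspose_eq_transpose_of_trivial]
  exact G.isSymm_adjMatrix

/-- The energy of a graph: the sum of the absolute values of the
eigenvalues of its adjacency matrix. -/
def SimpleGraph.energy (G : SimpleGraph V) [DecidableRel G.Adj] : ℝ :=
  ∑ k, |G.isHermitian_adjMatrix'.eigenvalues k|

/-- The Randić index of a graph: the sum over the (unordered) edges `(i,j)`
of `1/√(deg i · deg j)`. -/
def SimpleGraph.randic (G : SimpleGraph V) [DecidableRel G.Adj] : ℝ :=
  ∑ e ∈ G.edgeFinset,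
    Sym2.lift ⟨fun i j => 1 / Real.sqrt (G.degree i * G.degree j),
      fun i j => by simp [mul_comm]⟩ e

end
/-- For the path `P_n` with `n` odd and the weights
`p_i^{i+1} = (n-i)/(n-1)` for odd `i`, `i/(n+1)` for even `i`, and
`p_i^{i-1} = (i-1)/(n-1)` for odd `i`, `(n+1-i)/(n+1)` for even `i`,
the weighted edge sum satisfies `2 ∑_{i=1}^{n-1} √(p_i^{i+1} p_{i+1}^i) = √(n²-1)`. -/
lemma aux_sum (c : ℝ) (k : ℕ) :
    ∑ i ∈ Finset.Icc 1 (2*k), (if Odd i then c - (i:ℝ) else (i:ℝ)) = k * (c+1) := by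
  induction k with
  | zero => simp
  | succ k ih =>
    have h1 : 2*(k+1) = (2*k+1)+1 := by ring
    rw [h1, Finset.sum_Icc_succ_top (by omega), Finset.sum_Icc_succ_top (by omega), ih]
    have ho : Odd (2*k+1) := ⟨k, by ring⟩
    have he : ¬ Odd (2*k+1+1) := by
      intro h; obtain ⟨m, hm⟩ := h; omega
    rw [if_pos ho, if_neg he]
    push_cast
    ring

theorem stmt15 {n : ℕ} (hn : Odd n) (p : ℕ → ℕ → ℝ)
    (hnext : ∀ i, 1 ≤ i → i ≤ n - 1 →
      p i (i + 1) = if Odd i then ((n : ℝ) - i) / ((n : ℝ) - 1)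
        else (i : ℝ) / ((n : ℝ) + 1))
    (hprev : ∀ i, 2 ≤ i → i ≤ n →
      p i (i - 1) = if Odd i then ((i : ℝ) - 1) / ((n : ℝ) - 1)
        else ((n : ℝ) + 1 - i) / ((n : ℝ) + 1)) :
    2 * ∑ i ∈ Finset.Icc 1 (n - 1), Real.sqrt (p i (i + 1) * p (i + 1) i)
      = Real.sqrt ((n : ℝ) ^ 2 - 1) := by
  obtain ⟨k, hk⟩ := hn
  subst hk
  rcases Nat.eq_zero_or_pos k with hk0 | hk1
  · subst hk0; norm_num
  · set N : ℝ := ((2*k+1 : ℕ) : ℝ) with hN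
    have hNval : N = 2*(k:ℝ)+1 := by rw [hN]; push_cast; ring
    have hk1' : (1:ℝ) ≤ (k:ℝ) := by exact_mod_cast hk1
    have hNpos : (0:ℝ) < N^2 - 1 := by nlinarith
    set s := Real.sqrt (N^2 - 1) with hs
    have hs2 : s^2 = N^2 - 1 := Real.sq_sqrt hNpos.le
    have hs0 : 0 < s := Real.sqrt_pos.mpr hNpos
    have hsub : 2*k+1-1 = 2*k := by omega
    rw [hsub]
    have hterm : ∀ i ∈ Finset.Icc 1 (2*k),
        Real.sqrt (p i (i+1) * p (i+1) i)
          = (if Odd i then N - (i:ℝ) else (i:ℝ)) / s := by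
      intro i hi
      simp only [Finset.mem_Icc] at hi
      obtain ⟨hi1, hi2⟩ := hi
      have hp1 := hnext i hi1 (by omega)
      have hp2 := hprev (i+1) (by omega) (by omega)
      simp only [Nat.add_sub_cancel] at hp2
      rw [hp1, hp2]
      by_cases hoi : Odd i
      · have hne : ¬ Odd (i+1) := by
          intro h; obtain ⟨m, hm⟩ := h; obtain ⟨m', hm'⟩ := hoi; omega
        rw [if_pos hoi, if_neg hne, if_pos hoi]
        have hiN : (i:ℝ) ≤ N - 1 := by
          rw [hNval]; have : (i:ℝ) ≤ 2*(k:ℝ) := by exact_mod_cast hi2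
          linarith
        have hinner : (N - (i:ℝ)) / (N - 1) * ((N + 1 - ((i:ℝ)+1)) / (N + 1))
            = ((N - (i:ℝ)) / s)^2 := by
          rw [div_pow, hs2]
          have h1 : N - 1 ≠ 0 := by rw [hNval]; nlinarith
          have h2 : N + 1 ≠ 0 := by rw [hNval]; nlinarith
          have h3 : N^2 - 1 ≠ 0 := hNpos.ne'
          field_simp
          ring
        push_cast
        rw [hinner, Real.sqrt_sq (div_nonneg (by linarith) hs0.le)]
      · have hne : Odd (i+1) := by
          rcases Nat.even_or_odd i with he | ho
          · obtain ⟨m, hm⟩ := he; exact ⟨m, by omega⟩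
          · exact absurd ho hoi
        rw [if_neg hoi, if_pos hne, if_neg hoi]
        have hinner : (i:ℝ) / (N + 1) * ((((i:ℝ)+1) - 1) / (N - 1))
            = ((i:ℝ) / s)^2 := by
          rw [div_pow, hs2]
          have h1 : N - 1 ≠ 0 := by rw [hNval]; nlinarith
          have h2 : N + 1 ≠ 0 := by rw [hNval]; nlinarith
          have h3 : N^2 - 1 ≠ 0 := hNpos.ne'
          field_simp
          ring
        push_cast
        rw [hinner, Real.sqrt_sq (by positivity)]
    rw [Finset.sum_congr rfl hterm, ← Finset.sum_div, aux_sum]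
    field_simp
    rw [hs2, hNval]
    push_cast
    ring
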